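/- Let F_1, …, F_r be submodular functions on V with F_j(∅) = 0, and let f_j be the Lovász extension of F_j. Then min_{x ∈ ℝ^V} [ Σ_{j=1}^r f_j(x) + (1/2)‖x‖² ] = − (1/2) min { ‖ Σ_{j=1}^r y_j ‖² : y_j ∈ B(F_j) for all j }, both minima are attained, and if (y_1,…,y_r) attains the right-hand minimum then x = − Σ_{j=1}^r y_j is the unique minimizer of the left-hand problem. -/
import Mathlib


open Finset
open Finset

def Submodular {n : ℕ} (F : Finset (Fin n) → ℝ) : Prop :=
  ∀ S T : Finset (Fin n), F (S ∪ T) + F (S ∩ T) ≤ F S + F T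

def basePolytope {n : ℕ} (F : Finset (Fin n) → ℝ) : Set (Fin n → ℝ) :=
  {y | (∀ S : Finset (Fin n), ∑ i ∈ S, y i ≤ F S) ∧ ∑ i, y i = F Finset.univ}

def SortsDesc {n : ℕ} (x : Fin n → ℝ) (σ : Equiv.Perm (Fin n)) : Prop :=
  ∀ j k : Fin n, j ≤ k → x (σ k) ≤ x (σ j)

def lovaszVal {n : ℕ} (F : Finset (Fin n) → ℝ) (x : Fin n → ℝ) (σ : Equiv.Perm (Fin n)) : ℝ :=
  ∑ k : Fin n, x (σ k) *
    (F ((Finset.univ.filter (fun j => j ≤ k)).image ⇑σ)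
      - F ((Finset.univ.filter (fun j => j < k)).image ⇑σ))

def IsLovasz {n : ℕ} (F : Finset (Fin n) → ℝ) (f : (Fin n → ℝ) → ℝ) : Prop :=
  ∀ (x : Fin n → ℝ) (σ : Equiv.Perm (Fin n)), SortsDesc x σ → f x = lovaszVal F x σ

section Aux

variable {n : ℕ}

/-- The set of the first `m` elements in the order given by `σ`. -/
def Tset (σ : Equiv.Perm (Fin n)) (m : ℕ) : Finset (Fin n) :=
  (Finset.univ.filter (fun j : Fin n => (j : ℕ) < m)).image ⇑σ

lemma Tset_zero (σ : Equiv.Perm (Fin n)) : Tset σ 0 = ∅ := by simp [Tset]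

lemma Tset_ge (σ : Equiv.Perm (Fin n)) {m : ℕ} (hm : n ≤ m) :
    Tset σ m = Finset.univ := by
  have h : (Finset.univ.filter (fun j : Fin n => (j : ℕ) < m)) = Finset.univ := by
    apply Finset.filter_true_of_mem
    intro j _
    exact lt_of_lt_of_le j.isLt hm
  rw [Tset, h, Finset.image_univ_equiv]

lemma notMem_Tset (σ : Equiv.Perm (Fin n)) (k : Fin n) : σ k ∉ Tset σ (k : ℕ) := by
  simp only [Tset, Finset.mem_image, Finset.mem_filter, Finset.mem_univ, true_and]
  rintro ⟨j, hj, hjk⟩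
  cases σ.injective hjk
  exact lt_irrefl _ hj

lemma Tset_succ (σ : Equiv.Perm (Fin n)) (k : Fin n) :
    Tset σ ((k : ℕ) + 1) = insert (σ k) (Tset σ (k : ℕ)) := by
  have h : (Finset.univ.filter (fun j : Fin n => (j : ℕ) < (k : ℕ) + 1)) =
      insert k (Finset.univ.filter (fun j : Fin n => (j : ℕ) < (k : ℕ))) := by
    ext j
    simp only [Finset.mem_filter, Finset.mem_univ, true_and, Finset.mem_insert,
      Nat.lt_succ_iff_lt_or_eq, Fin.ext_iff]
    tauto
  rw [Tset, h, Finset.image_insert]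
  rfl

lemma lovasz_eq (F : Finset (Fin n) → ℝ) (x : Fin n → ℝ) (σ : Equiv.Perm (Fin n)) :
    lovaszVal F x σ =
      ∑ k : Fin n, x (σ k) * (F (Tset σ ((k : ℕ) + 1)) - F (Tset σ (k : ℕ))) := by
  unfold lovaszVal
  apply Finset.sum_congr rfl
  intro k _
  have h1 : (Finset.univ.filter (fun j : Fin n => j ≤ k)) =
      (Finset.univ.filter (fun j : Fin n => (j : ℕ) < (k : ℕ) + 1)) := by
    apply Finset.filter_congr
    intro j _
    rw [Fin.le_def]
    omega
  have h2 : (Finset.univ.filter (fun j : Fin n => j < k)) =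
      (Finset.univ.filter (fun j : Fin n => (j : ℕ) < (k : ℕ))) := by
    apply Finset.filter_congr
    intro j _
    rw [Fin.lt_def]
  rw [h1, h2]
  rfl

/-- The greedy vector associated to a permutation. -/
def greedy (F : Finset (Fin n) → ℝ) (σ : Equiv.Perm (Fin n)) : Fin n → ℝ :=
  fun i => F (Tset σ ((σ.symm i : ℕ) + 1)) - F (Tset σ ((σ.symm i : ℕ)))

lemma greedy_apply (F : Finset (Fin n) → ℝ) (σ : Equiv.Perm (Fin n)) (k : Fin n) :
    greedy F σ (σ k) = F (Tset σ ((k : ℕ) + 1)) - F (Tset σ (k : ℕ)) := by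
  simp [greedy]

lemma telescope (D : ℕ → ℝ) :
    ∑ k : Fin n, (D ((k : ℕ) + 1) - D (k : ℕ)) = D n - D 0 := by
  rw [Fin.sum_univ_eq_sum_range (fun k => D (k + 1) - D k) n, Finset.sum_range_sub]

lemma greedy_mem {F : Finset (Fin n) → ℝ} (hsub : Submodular F) (h0 : F ∅ = 0)
    (σ : Equiv.Perm (Fin n)) : greedy F σ ∈ basePolytope F := by
  constructor
  · intro S
    have hrw : ∑ i ∈ S, greedy F σ i =
        ∑ k : Fin n, (if σ k ∈ S then F (Tset σ ((k : ℕ) + 1)) - F (Tset σ (k : ℕ)) else 0) := by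
      calc ∑ i ∈ S, greedy F σ i
          = ∑ i : Fin n, (if i ∈ S then greedy F σ i else 0) := by
            rw [Finset.sum_ite_mem, Finset.univ_inter]
        _ = ∑ k : Fin n, (if σ k ∈ S then greedy F σ (σ k) else 0) :=
            (Equiv.sum_comp σ _).symm
        _ = _ := Finset.sum_congr rfl fun k _ => by rw [greedy_apply]
    rw [hrw]
    have hle : ∀ k : Fin n,
        (if σ k ∈ S then F (Tset σ ((k : ℕ) + 1)) - F (Tset σ (k : ℕ)) else 0) ≤
        F (S ∩ Tset σ ((k : ℕ) + 1)) - F (S ∩ Tset σ (k : ℕ)) := by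
      intro k
      by_cases h : σ k ∈ S
      · rw [if_pos h]
        have key := hsub (S ∩ Tset σ ((k : ℕ) + 1)) (Tset σ (k : ℕ))
        have hU : (S ∩ Tset σ ((k : ℕ) + 1)) ∪ Tset σ (k : ℕ) = Tset σ ((k : ℕ) + 1) := by
          rw [Tset_succ]
          ext i
          simp only [Finset.mem_union, Finset.mem_inter, Finset.mem_insert]
          constructor
          · rintro (⟨_, h2⟩ | h2)
            · exact h2
            · exact Or.inr h2
          · rintro (rfl | h2)
            · exact Or.inl ⟨h, Or.inl rfl⟩
            · exact Or.inr h2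
        have hI : (S ∩ Tset σ ((k : ℕ) + 1)) ∩ Tset σ (k : ℕ) = S ∩ Tset σ (k : ℕ) := by
          rw [Tset_succ]
          ext i
          simp only [Finset.mem_inter, Finset.mem_insert]
          constructor
          · rintro ⟨⟨h1, _⟩, h3⟩
            exact ⟨h1, h3⟩
          · rintro ⟨h1, h3⟩
            exact ⟨⟨h1, Or.inr h3⟩, h3⟩
        rw [hU, hI] at key
        linarith
      · rw [if_neg h]
        have heq : S ∩ Tset σ ((k : ℕ) + 1) = S ∩ Tset σ (k : ℕ) := by
          rw [Tset_succ]
          ext i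
          simp only [Finset.mem_inter, Finset.mem_insert]
          constructor
          · rintro ⟨h1, (rfl | h3)⟩
            · exact absurd h1 h
            · exact ⟨h1, h3⟩
          · rintro ⟨h1, h3⟩
            exact ⟨h1, Or.inr h3⟩
        rw [heq]
        simp
    calc ∑ k : Fin n, (if σ k ∈ S then F (Tset σ ((k : ℕ) + 1)) - F (Tset σ (k : ℕ)) else 0)
        ≤ ∑ k : Fin n, (F (S ∩ Tset σ ((k : ℕ) + 1)) - F (S ∩ Tset σ (k : ℕ))) :=
          Finset.sum_le_sum fun k _ => hle k
      _ = F (S ∩ Tset σ n) - F (S ∩ Tset σ 0) := telescope (fun m => F (S ∩ Tset σ m))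
      _ = F S := by
          rw [Tset_ge σ le_rfl, Tset_zero, Finset.inter_univ, Finset.inter_empty, h0]
          ring
  · calc ∑ i : Fin n, greedy F σ i = ∑ k : Fin n, greedy F σ (σ k) :=
          (Equiv.sum_comp σ _).symm
      _ = ∑ k : Fin n, (F (Tset σ ((k : ℕ) + 1)) - F (Tset σ (k : ℕ))) :=
          Finset.sum_congr rfl fun k _ => greedy_apply F σ k
      _ = F (Tset σ n) - F (Tset σ 0) := telescope (fun m => F (Tset σ m))
      _ = F Finset.univ := by rw [Tset_ge σ le_rfl, Tset_zero, h0]; ring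

lemma greedy_inner (F : Finset (Fin n) → ℝ) (x : Fin n → ℝ) (σ : Equiv.Perm (Fin n)) :
    ∑ i : Fin n, x i * greedy F σ i = lovaszVal F x σ := by
  rw [lovasz_eq]
  calc ∑ i : Fin n, x i * greedy F σ i
      = ∑ k : Fin n, x (σ k) * greedy F σ (σ k) := (Equiv.sum_comp σ _).symm
    _ = _ := Finset.sum_congr rfl fun k _ => by rw [greedy_apply]

lemma exists_sortsDesc (x : Fin n → ℝ) : ∃ σ : Equiv.Perm (Fin n), SortsDesc x σ := by
  refine ⟨Tuple.sort (fun i => -x i), fun j k hjk => ?_⟩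
  have := Tuple.monotone_sort (fun i => -x i) hjk
  simpa using this

lemma inner_le_lovasz {F : Finset (Fin n) → ℝ} (h0 : F ∅ = 0)
    {y : Fin n → ℝ} (hy : y ∈ basePolytope F) {x : Fin n → ℝ} {σ : Equiv.Perm (Fin n)}
    (hs : SortsDesc x σ) : ∑ i : Fin n, x i * y i ≤ lovaszVal F x σ := by
  set d : ℕ → ℝ := fun m => F (Tset σ m) - ∑ i ∈ Tset σ m, y i with hd
  have hd0 : d 0 = 0 := by simp [hd, Tset_zero, h0]
  have hdn : d n = 0 := by simp [hd, Tset_ge σ le_rfl, hy.2]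
  have hdnn : ∀ m, 0 ≤ d m := fun m => sub_nonneg.mpr (hy.1 (Tset σ m))
  have hyk : ∀ k : Fin n, y (σ k) =
      (∑ i ∈ Tset σ ((k : ℕ) + 1), y i) - ∑ i ∈ Tset σ (k : ℕ), y i := by
    intro k
    rw [Tset_succ, Finset.sum_insert (notMem_Tset σ k)]
    ring
  set a : ℕ → ℝ := fun k => if h : k < n then x (σ ⟨k, h⟩) else 0 with ha
  have goal_eq : lovaszVal F x σ - ∑ i : Fin n, x i * y i =
      ∑ k ∈ Finset.range n, a k • (d (k + 1) - d k) := by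
    rw [lovasz_eq,
      show ∑ i : Fin n, x i * y i = ∑ k : Fin n, x (σ k) * y (σ k) from
        (Equiv.sum_comp σ _).symm,
      ← Finset.sum_sub_distrib,
      ← Fin.sum_univ_eq_sum_range (fun k => a k • (d (k + 1) - d k)) n]
    apply Finset.sum_congr rfl
    intro k _
    have hk : (k : ℕ) < n := k.isLt
    simp only [ha, dif_pos hk, Fin.eta, smul_eq_mul, hd]
    rw [hyk k]
    ring
  have hG : ∀ m, ∑ i ∈ Finset.range m, (d (i + 1) - d i) = d m := by
    intro m
    rw [Finset.sum_range_sub d m, hd0, sub_zero]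
  have hparts := Finset.sum_range_by_parts a (fun k => d (k + 1) - d k) n
  simp only [hG, hdn, smul_zero, zero_sub] at hparts
  have hterm : ∑ i ∈ Finset.range (n - 1), (a (i + 1) - a i) • d (i + 1) ≤ 0 := by
    apply Finset.sum_nonpos
    intro i hi
    rw [Finset.mem_range] at hi
    have hi1 : i + 1 < n := by omega
    have hi0 : i < n := by omega
    have hmono : x (σ ⟨i + 1, hi1⟩) ≤ x (σ ⟨i, hi0⟩) :=
      hs ⟨i, hi0⟩ ⟨i + 1, hi1⟩ (by simp [Fin.le_def])
    have hanp : a (i + 1) - a i ≤ 0 := by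
      simp only [ha, dif_pos hi1, dif_pos hi0]
      linarith
    have := mul_nonpos_of_nonpos_of_nonneg hanp (hdnn (i + 1))
    simpa [smul_eq_mul] using this
  linarith [goal_eq, hparts, hterm]

lemma sq_sum_expand (x w : Fin n → ℝ) :
    ∑ i : Fin n, (x i + w i) ^ 2 =
      ∑ i : Fin n, (x i) ^ 2 + 2 * ∑ i : Fin n, x i * w i + ∑ i : Fin n, (w i) ^ 2 := by
  rw [Finset.mul_sum, ← Finset.sum_add_distrib, ← Finset.sum_add_distrib]
  exact Finset.sum_congr rfl fun i _ => by ring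

lemma bp_segment {F : Finset (Fin n) → ℝ} {a b : Fin n → ℝ}
    (ha : a ∈ basePolytope F) (hb : b ∈ basePolytope F) {t : ℝ} (h0 : 0 ≤ t) (h1 : t ≤ 1) :
    (fun i => a i + t * (b i - a i)) ∈ basePolytope F := by
  have key : ∀ S : Finset (Fin n), ∑ i ∈ S, (a i + t * (b i - a i)) =
      (∑ i ∈ S, a i) + t * ((∑ i ∈ S, b i) - ∑ i ∈ S, a i) := by
    intro S
    rw [Finset.sum_add_distrib, ← Finset.mul_sum, Finset.sum_sub_distrib]
  constructor
  · intro S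
    rw [key S]
    have h1' := ha.1 S
    have h2' := hb.1 S
    nlinarith
  · rw [key Finset.univ, ha.2, hb.2]
    ring

lemma bp_isCompact (F : Finset (Fin n) → ℝ) : IsCompact (basePolytope F) := by
  apply Metric.isCompact_of_isClosed_isBounded
  · have hrep : basePolytope F =
        (⋂ S : Finset (Fin n), {y : Fin n → ℝ | ∑ i ∈ S, y i ≤ F S}) ∩
          {y : Fin n → ℝ | ∑ i : Fin n, y i = F Finset.univ} := by
      ext y
      simp [basePolytope, Set.mem_iInter]
    rw [hrep]
    apply IsClosed.inter
    · exact isClosed_iInter fun S =>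
        isClosed_le (continuous_finset_sum _ fun i _ => continuous_apply i) continuous_const
    · exact isClosed_eq (continuous_finset_sum _ fun i _ => continuous_apply i) continuous_const
  · rw [isBounded_iff_forall_norm_le]
    refine ⟨∑ i : Fin n, (|F {i}| + |F Finset.univ - F (Finset.univ.erase i)|), ?_⟩
    intro y hy
    have hCnn : ∀ i : Fin n, (0:ℝ) ≤ |F {i}| + |F Finset.univ - F (Finset.univ.erase i)| :=
      fun i => by positivity
    rw [pi_norm_le_iff_of_nonneg (Finset.sum_nonneg fun i _ => hCnn i)]
    intro i
    have hsingle : ∀ i : Fin n, |F {i}| + |F Finset.univ - F (Finset.univ.erase i)| ≤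
        ∑ i : Fin n, (|F {i}| + |F Finset.univ - F (Finset.univ.erase i)|) :=
      fun i => Finset.single_le_sum (fun i _ => hCnn i) (Finset.mem_univ i)
    rw [Real.norm_eq_abs, abs_le]
    have hub : y i ≤ F {i} := by
      have := hy.1 {i}
      simpa using this
    have hlb : F Finset.univ - F (Finset.univ.erase i) ≤ y i := by
      have herase := hy.1 (Finset.univ.erase i)
      have hsum : y i + ∑ j ∈ Finset.univ.erase i, y j = ∑ j : Fin n, y j :=
        Finset.add_sum_erase Finset.univ y (Finset.mem_univ i)
      have := hy.2
      linarith
    have h3 := abs_nonneg (F {i})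
    have h4 := abs_nonneg (F Finset.univ - F (Finset.univ.erase i))
    constructor
    · have := hsingle i
      have h1 := neg_abs_le (F {i})
      have h2 := neg_abs_le (F Finset.univ - F (Finset.univ.erase i))
      linarith
    · have := hsingle i
      have h1 := le_abs_self (F {i})
      have h2 := le_abs_self (F Finset.univ - F (Finset.univ.erase i))
      linarith

end Aux


section Duality

variable {n r : ℕ}

lemma weak_duality {F : Fin r → Finset (Fin n) → ℝ} (hF0 : ∀ j, F j ∅ = 0)
    {f : Fin r → (Fin n → ℝ) → ℝ} (hf : ∀ j, IsLovasz (F j) (f j))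
    {y : Fin r → Fin n → ℝ} (hy : ∀ j, y j ∈ basePolytope (F j)) (x : Fin n → ℝ) :
    ∑ i : Fin n, x i * (∑ j, y j i) ≤ ∑ j, f j x := by
  obtain ⟨σ, hσ⟩ := exists_sortsDesc x
  have h : ∀ j, ∑ i : Fin n, x i * y j i ≤ f j x := fun j => by
    rw [hf j x σ hσ]
    exact inner_le_lovasz (hF0 j) (hy j) hσ
  calc ∑ i : Fin n, x i * (∑ j, y j i)
      = ∑ i : Fin n, ∑ j, x i * y j i :=
        Finset.sum_congr rfl fun i _ => Finset.mul_sum _ _ _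
    _ = ∑ j, ∑ i : Fin n, x i * y j i := Finset.sum_comm
    _ ≤ ∑ j, f j x := Finset.sum_le_sum fun j _ => h j

lemma first_order {F : Fin r → Finset (Fin n) → ℝ}
    {y : Fin r → Fin n → ℝ} (hy : ∀ j, y j ∈ basePolytope (F j))
    (hopt : ∀ z : Fin r → Fin n → ℝ, (∀ j, z j ∈ basePolytope (F j)) →
      ∑ i : Fin n, (∑ j, y j i) ^ 2 ≤ ∑ i : Fin n, (∑ j, z j i) ^ 2)
    (j : Fin r) {z : Fin n → ℝ} (hz : z ∈ basePolytope (F j)) :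
    ∑ i : Fin n, (∑ j', y j' i) * y j i ≤ ∑ i : Fin n, (∑ j', y j' i) * z i := by
  classical
  have hstep : ∀ t : ℝ, 0 ≤ t → t ≤ 1 →
      0 ≤ 2 * t * (∑ i : Fin n, (∑ j', y j' i) * (z i - y j i))
        + t ^ 2 * ∑ i : Fin n, (z i - y j i) ^ 2 := by
    intro t ht0 ht1
    set yt : Fin r → Fin n → ℝ :=
      fun j' => if j' = j then (fun i => y j i + t * (z i - y j i)) else y j' with hyt
    have hfeas : ∀ j', yt j' ∈ basePolytope (F j') := by
      intro j'
      by_cases h : j' = j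
      · subst h
        simpa [hyt] using bp_segment (hy j') hz ht0 ht1
      · simpa [hyt, h] using hy j'
    have hsum : ∀ i, ∑ j', yt j' i = (∑ j', y j' i) + t * (z i - y j i) := by
      intro i
      have hterm : ∀ j', yt j' i = y j' i + (if j' = j then t * (z i - y j i) else 0) := by
        intro j'
        by_cases h : j' = j
        · subst h; simp [hyt]
        · simp [hyt, h]
      rw [Finset.sum_congr rfl fun j' _ => hterm j', Finset.sum_add_distrib]
      congr 1
      simp
    have h1 := hopt yt hfeas
    have h2 : ∑ i : Fin n, (∑ j', yt j' i) ^ 2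
        = ∑ i : Fin n, (∑ j', y j' i) ^ 2
          + (2 * t * (∑ i : Fin n, (∑ j', y j' i) * (z i - y j i))
            + t ^ 2 * ∑ i : Fin n, (z i - y j i) ^ 2) := by
      calc ∑ i : Fin n, (∑ j', yt j' i) ^ 2
          = ∑ i : Fin n, ((∑ j', y j' i) + t * (z i - y j i)) ^ 2 :=
            Finset.sum_congr rfl fun i _ => by rw [hsum i]
        _ = ∑ i : Fin n, ((∑ j', y j' i) ^ 2
              + ((∑ j', y j' i) * (z i - y j i)) * (2 * t)
              + ((z i - y j i) ^ 2) * t ^ 2) :=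
            Finset.sum_congr rfl fun i _ => by ring
        _ = _ := by
            rw [Finset.sum_add_distrib, Finset.sum_add_distrib, ← Finset.sum_mul,
              ← Finset.sum_mul]
            ring
    linarith [h1, h2]
  set A := ∑ i : Fin n, (∑ j', y j' i) * (z i - y j i) with hA
  set B := ∑ i : Fin n, (z i - y j i) ^ 2 with hB
  have hBnn : 0 ≤ B := Finset.sum_nonneg fun i _ => sq_nonneg _
  have h2A : (0:ℝ) ≤ 2 * A := by
    apply le_of_forall_pos_le_add
    intro ε hε
    set t := min 1 (ε / (B + 1)) with ht
    have ht0 : 0 < t := lt_min one_pos (div_pos hε (by linarith))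
    have ht1 : t ≤ 1 := min_le_left _ _
    have h := hstep t ht0.le ht1
    have htB : t * B ≤ ε := by
      have hle : t ≤ ε / (B + 1) := min_le_right _ _
      have hmul : t * B ≤ (ε / (B + 1)) * B := mul_le_mul_of_nonneg_right hle hBnn
      have h2 : (ε / (B + 1)) * B ≤ ε := by
        rw [div_mul_eq_mul_div, div_le_iff₀ (by linarith : (0:ℝ) < B + 1)]
        nlinarith
      linarith
    have h' : 0 ≤ 2 * A + t * B := by
      by_contra hneg
      push_neg at hneg
      nlinarith [mul_pos ht0 (neg_pos.mpr hneg), h]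
    linarith
  have hAexp : A = ∑ i : Fin n, (∑ j', y j' i) * z i - ∑ i : Fin n, (∑ j', y j' i) * y j i := by
    rw [hA, ← Finset.sum_sub_distrib]
    exact Finset.sum_congr rfl fun i _ => by ring
  linarith

lemma dual_opt_inner {F : Fin r → Finset (Fin n) → ℝ}
    (hF0 : ∀ j, F j ∅ = 0) (hF : ∀ j, Submodular (F j))
    {f : Fin r → (Fin n → ℝ) → ℝ} (hf : ∀ j, IsLovasz (F j) (f j))
    {y : Fin r → Fin n → ℝ} (hy : ∀ j, y j ∈ basePolytope (F j))
    (hopt : ∀ z : Fin r → Fin n → ℝ, (∀ j, z j ∈ basePolytope (F j)) →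
      ∑ i : Fin n, (∑ j, y j i) ^ 2 ≤ ∑ i : Fin n, (∑ j, z j i) ^ 2)
    (j : Fin r) :
    f j (fun i => -∑ j', y j' i) = ∑ i : Fin n, (-∑ j', y j' i) * y j i := by
  obtain ⟨σ, hσ⟩ := exists_sortsDesc (fun i => -∑ j', y j' i)
  have h1 : f j (fun i => -∑ j', y j' i) = lovaszVal (F j) (fun i => -∑ j', y j' i) σ :=
    hf j _ σ hσ
  have h2 : ∑ i : Fin n, (-∑ j', y j' i) * y j i ≤
      lovaszVal (F j) (fun i => -∑ j', y j' i) σ :=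
    inner_le_lovasz (hF0 j) (hy j) hσ
  have h3 : lovaszVal (F j) (fun i => -∑ j', y j' i) σ =
      ∑ i : Fin n, (-∑ j', y j' i) * greedy (F j) σ i :=
    (greedy_inner _ _ _).symm
  have h4 := first_order hy hopt j (greedy_mem (hF j) (hF0 j) σ)
  have h5 : ∑ i : Fin n, (-∑ j', y j' i) * greedy (F j) σ i ≤
      ∑ i : Fin n, (-∑ j', y j' i) * y j i := by
    have e1 : ∑ i : Fin n, (-∑ j', y j' i) * greedy (F j) σ i
        = -∑ i : Fin n, (∑ j', y j' i) * greedy (F j) σ i := by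
      rw [← Finset.sum_neg_distrib]
      exact Finset.sum_congr rfl fun i _ => by ring
    have e2 : ∑ i : Fin n, (-∑ j', y j' i) * y j i
        = -∑ i : Fin n, (∑ j', y j' i) * y j i := by
      rw [← Finset.sum_neg_distrib]
      exact Finset.sum_congr rfl fun i _ => by ring
    rw [e1, e2]
    linarith
  linarith

lemma value_at_dual_opt {F : Fin r → Finset (Fin n) → ℝ}
    (hF0 : ∀ j, F j ∅ = 0) (hF : ∀ j, Submodular (F j))
    {f : Fin r → (Fin n → ℝ) → ℝ} (hf : ∀ j, IsLovasz (F j) (f j))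
    {y : Fin r → Fin n → ℝ} (hy : ∀ j, y j ∈ basePolytope (F j))
    (hopt : ∀ z : Fin r → Fin n → ℝ, (∀ j, z j ∈ basePolytope (F j)) →
      ∑ i : Fin n, (∑ j, y j i) ^ 2 ≤ ∑ i : Fin n, (∑ j, z j i) ^ 2) :
    (∑ j, f j (fun i => -∑ j', y j' i)) + (1/2) * ∑ i : Fin n, (-∑ j', y j' i) ^ 2
      = -(1/2) * ∑ i : Fin n, (∑ j, y j i) ^ 2 := by
  have h1 : ∑ j, f j (fun i => -∑ j', y j' i) = -∑ i : Fin n, (∑ j, y j i) ^ 2 := by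
    calc ∑ j, f j (fun i => -∑ j', y j' i)
        = ∑ j, ∑ i : Fin n, (-∑ j', y j' i) * y j i :=
          Finset.sum_congr rfl fun j _ => dual_opt_inner hF0 hF hf hy hopt j
      _ = ∑ i : Fin n, ∑ j, (-∑ j', y j' i) * y j i := Finset.sum_comm
      _ = ∑ i : Fin n, (-∑ j', y j' i) * ∑ j, y j i :=
          Finset.sum_congr rfl fun i _ => (Finset.mul_sum _ _ _).symm
      _ = -∑ i : Fin n, (∑ j, y j i) ^ 2 := by
          rw [← Finset.sum_neg_distrib]
          exact Finset.sum_congr rfl fun i _ => by ring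
  have h2 : ∑ i : Fin n, (-∑ j', y j' i) ^ 2 = ∑ i : Fin n, (∑ j, y j i) ^ 2 :=
    Finset.sum_congr rfl fun i _ => by ring
  rw [h1, h2]
  ring

end Duality

/-- simplified dual of the proximal problem:
`min_x [Σ_j f_j(x) + ½‖x‖²] = −(1/2) min {‖Σ_j y_j‖² : y_j ∈ B(F_j)}`,
both minima are attained, and any dual optimum `(y_1,…,y_r)` yields the unique
primal minimizer `x = −Σ_j y_j`. -/
theorem statement6 {n r : ℕ} (F : Fin r → Finset (Fin n) → ℝ)
    (hF0 : ∀ j, F j ∅ = 0) (hF : ∀ j, Submodular (F j))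
    (f : Fin r → (Fin n → ℝ) → ℝ) (hf : ∀ j, IsLovasz (F j) (f j)) :
    ∃ m s : ℝ,
      IsLeast (Set.range (fun x : Fin n → ℝ =>
        (∑ j, f j x) + (1/2) * ∑ i, (x i)^2)) m ∧
      IsLeast {v : ℝ | ∃ y : Fin r → Fin n → ℝ,
        (∀ j, y j ∈ basePolytope (F j)) ∧ v = ∑ i, (∑ j, y j i)^2} s ∧
      m = -(1/2) * s ∧
      ∀ y : Fin r → Fin n → ℝ, (∀ j, y j ∈ basePolytope (F j)) →
        (∑ i, (∑ j, y j i)^2 = s) →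
        ((∑ j, f j (fun i => -∑ j', y j' i)) + (1/2) * ∑ i, ((fun i => -∑ j', y j' i) i)^2 = m ∧
         ∀ x : Fin n → ℝ, (∑ j, f j x) + (1/2) * ∑ i, (x i)^2 = m →
           x = fun i => -∑ j', y j' i) := by
  classical
  have hKc : IsCompact (Set.univ.pi fun j => basePolytope (F j)) :=
    isCompact_univ_pi fun j => bp_isCompact (F j)
  have hKne : (Set.univ.pi fun j => basePolytope (F j)).Nonempty :=
    ⟨fun j => greedy (F j) 1, fun j _ => greedy_mem (hF j) (hF0 j) 1⟩
  have hgc : Continuous (fun y : Fin r → Fin n → ℝ => ∑ i, (∑ j, y j i) ^ 2) := by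
    apply continuous_finset_sum
    intro i _
    exact (continuous_finset_sum _ fun j _ =>
      (continuous_apply i).comp (continuous_apply j)).pow 2
  obtain ⟨ys, hysK, hmin⟩ := hKc.exists_isMinOn hKne hgc.continuousOn
  have hysfeas : ∀ j, ys j ∈ basePolytope (F j) := fun j => hysK j (Set.mem_univ j)
  have hmin' : ∀ z : Fin r → Fin n → ℝ, (∀ j, z j ∈ basePolytope (F j)) →
      ∑ i, (∑ j, ys j i) ^ 2 ≤ ∑ i, (∑ j, z j i) ^ 2 :=
    fun z hz => hmin (fun j _ => hz j)
  refine ⟨-(1/2) * ∑ i, (∑ j, ys j i) ^ 2, ∑ i, (∑ j, ys j i) ^ 2, ?_, ?_, rfl, ?_⟩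
  · constructor
    · exact ⟨fun i => -∑ j', ys j' i, value_at_dual_opt hF0 hF hf hysfeas hmin'⟩
    · rintro v ⟨x, rfl⟩
      have hwd := weak_duality hF0 hf hysfeas x
      have hexp : ∑ i, (x i + ∑ j, ys j i) ^ 2
          = ∑ i, (x i) ^ 2 + 2 * ∑ i, x i * (∑ j, ys j i) + ∑ i, (∑ j, ys j i) ^ 2 :=
        sq_sum_expand x _
      have hnn : (0:ℝ) ≤ ∑ i, (x i + ∑ j, ys j i) ^ 2 :=
        Finset.sum_nonneg fun i _ => sq_nonneg _
      show -(1/2) * ∑ i, (∑ j, ys j i) ^ 2 ≤ (∑ j, f j x) + (1/2) * ∑ i, (x i) ^ 2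
      linarith
  · constructor
    · exact ⟨ys, hysfeas, rfl⟩
    · rintro v ⟨y, hy, rfl⟩
      exact hmin' y hy
  · intro y hy hseq
    have hopt : ∀ z : Fin r → Fin n → ℝ, (∀ j, z j ∈ basePolytope (F j)) →
        ∑ i, (∑ j, y j i) ^ 2 ≤ ∑ i, (∑ j, z j i) ^ 2 := by
      intro z hz
      rw [hseq]
      exact hmin' z hz
    constructor
    · show (∑ j, f j (fun i => -∑ j', y j' i)) + (1/2) * ∑ i, (-∑ j', y j' i) ^ 2
          = -(1/2) * ∑ i, (∑ j, ys j i) ^ 2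
      rw [value_at_dual_opt hF0 hF hf hy hopt, hseq]
    · intro x hx
      have hwd := weak_duality hF0 hf hy x
      have hexp : ∑ i, (x i + ∑ j, y j i) ^ 2
          = ∑ i, (x i) ^ 2 + 2 * ∑ i, x i * (∑ j, y j i) + ∑ i, (∑ j, y j i) ^ 2 :=
        sq_sum_expand x _
      have hnn : (0:ℝ) ≤ ∑ i, (x i + ∑ j, y j i) ^ 2 :=
        Finset.sum_nonneg fun i _ => sq_nonneg _
      have hzero : ∑ i, (x i + ∑ j, y j i) ^ 2 = 0 := by
        have hle : ∑ i, (x i + ∑ j, y j i) ^ 2 ≤ 0 := by linarith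
        linarith
      funext i
      show x i = -∑ j', y j' i
      have hall := (Finset.sum_eq_zero_iff_of_nonneg
        (fun i (_ : i ∈ Finset.univ) => sq_nonneg (x i + ∑ j, y j i))).mp hzero
      have hi : (x i + ∑ j, y j i) ^ 2 = 0 := hall i (Finset.mem_univ i)
      have hxi : x i + ∑ j, y j i = 0 := by
        nlinarith [sq_nonneg (x i + ∑ j, y j i)]
      linarith
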